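/- Let n ≥ 2, R > 0, and let g : [−1,1] → ℝ be continuous and positive definite on S^{n−1}. For x, y ∈ ℝ^n define F(x,y) = ∫_{B_R(x) ∩ B_R(y)} g(⟨(x−z)/|x−z|, (y−z)/|y−z|⟩) dz (the integrand is defined for almost every z). Then F is a positive-definite kernel: for all N, all x₁,…,x_N ∈ ℝ^n, and all t₁,…,t_N ∈ ℝ, one has Σ_{i,j} t_i t_j F(x_i, x_j) ≥ 0. Moreover F(x,y) depends only on |x−y|. -/

import Mathlib

open MeasureTheory Metric Real
open scoped BigOperators

theorem kernel_posdef_and_radial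
    (n : ℕ) (hn : 2 ≤ n) (R : ℝ) (hR : 0 < R)
    (g : ℝ → ℝ) (hg_cont : ContinuousOn g (Set.Icc (-1) 1))
    (hg_pd : ∀ (N : ℕ) (x : Fin N → EuclideanSpace ℝ (Fin n)), (∀ i, ‖x i‖ = 1) →
      ∀ t : Fin N → ℝ, 0 ≤ ∑ i, ∑ j, t i * t j * g (inner ℝ (x i) (x j)))
    (F : EuclideanSpace ℝ (Fin n) → EuclideanSpace ℝ (Fin n) → ℝ)
    (hF : ∀ x y, F x y = ∫ z in closedBall x R ∩ closedBall y R,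
      g (inner ℝ (‖x - z‖⁻¹ • (x - z)) (‖y - z‖⁻¹ • (y - z)))) :
    (∀ (N : ℕ) (x : Fin N → EuclideanSpace ℝ (Fin n)) (t : Fin N → ℝ),
      0 ≤ ∑ i, ∑ j, t i * t j * F (x i) (x j)) ∧
    (∀ x y x' y' : EuclideanSpace ℝ (Fin n), ‖x - y‖ = ‖x' - y'‖ → F x y = F x' y') := by
  classical
  haveI : Nontrivial (EuclideanSpace ℝ (Fin n)) := Module.nontrivial_of_finrank_pos (R := ℝ)
    (by rw [finrank_euclideanSpace_fin]; omega)
  -- normalization map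
  set nu : EuclideanSpace ℝ (Fin n) → EuclideanSpace ℝ (Fin n) → EuclideanSpace ℝ (Fin n) := fun x z => ‖x - z‖⁻¹ • (x - z) with hnu
  have hnu_le : ∀ x z : EuclideanSpace ℝ (Fin n), ‖nu x z‖ ≤ 1 := by
    intro x z
    rcases eq_or_ne (x - z) 0 with h | h
    · simp [hnu, h]
    · rw [hnu, norm_smul, norm_inv, norm_norm, inv_mul_cancel₀ (norm_ne_zero_iff.mpr h)]
  have hinner_mem : ∀ x y z : EuclideanSpace ℝ (Fin n), (inner ℝ (nu x z) (nu y z) : ℝ) ∈ Set.Icc (-1 : ℝ) 1 := by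
    intro x y z
    have h1 : |(inner ℝ (nu x z) (nu y z) : ℝ)| ≤ ‖nu x z‖ * ‖nu y z‖ := abs_real_inner_le_norm _ _
    have h2 : ‖nu x z‖ * ‖nu y z‖ ≤ 1 := by
      calc ‖nu x z‖ * ‖nu y z‖ ≤ 1 * 1 :=
            mul_le_mul (hnu_le x z) (hnu_le y z) (norm_nonneg _) zero_le_one
        _ = 1 := one_mul 1
    exact abs_le.mp (h1.trans h2)
  -- measurability
  have hnu_meas : ∀ x : EuclideanSpace ℝ (Fin n), Measurable (nu x) := by
    intro x
    exact (((continuous_const.sub continuous_id).norm.measurable).inv).smul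
      (continuous_const.sub continuous_id).measurable
  have hphi_meas : ∀ x y : EuclideanSpace ℝ (Fin n), Measurable (fun z => (inner ℝ (nu x z) (nu y z) : ℝ)) := by
    intro x y
    exact (hnu_meas x).inner (hnu_meas y)
  have hG_meas : ∀ x y : EuclideanSpace ℝ (Fin n), Measurable (fun z => g (inner ℝ (nu x z) (nu y z))) := by
    intro x y
    have : (fun z => g (inner ℝ (nu x z) (nu y z)))
        = fun z => (Set.Icc (-1 : ℝ) 1).restrict g
            ⟨inner ℝ (nu x z) (nu y z), hinner_mem x y z⟩ := rfl
    rw [this]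
    exact (ContinuousOn.restrict hg_cont).measurable.comp
      ((hphi_meas x y).subtype_mk)
  obtain ⟨C, hC⟩ : ∃ C, ∀ v ∈ Set.Icc (-1 : ℝ) 1, ‖g v‖ ≤ C :=
    (isCompact_Icc).exists_bound_of_continuousOn hg_cont
  have hG_int : ∀ x y : EuclideanSpace ℝ (Fin n), IntegrableOn (fun z => g (inner ℝ (nu x z) (nu y z)))
      (closedBall x R ∩ closedBall y R) volume := by
    intro x y
    apply Measure.integrableOn_of_bounded (M := C)
    · exact ne_top_of_le_ne_top (measure_closedBall_lt_top (x := x) (r := R)).ne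
        (measure_mono Set.inter_subset_left)
    · exact (hG_meas x y).aestronglyMeasurable
    · exact Filter.Eventually.of_forall fun z => hC _ (hinner_mem x y z)
  constructor
  · -- positive definiteness
    intro N x t
    set B : Fin N → Set (EuclideanSpace ℝ (Fin n)) := fun i => closedBall (x i) R with hB
    set f : Fin N → Fin N → EuclideanSpace ℝ (Fin n) → ℝ := fun i j =>
      (B i ∩ B j).indicator (fun z => t i * t j * g (inner ℝ (nu (x i) z) (nu (x j) z)))
      with hf
    have hmeas : ∀ i j : Fin N, MeasurableSet (B i ∩ B j) := fun i j =>
      (measurableSet_closedBall).inter measurableSet_closedBall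
    have hint : ∀ i j : Fin N, Integrable (f i j) volume := by
      intro i j
      exact IntegrableOn.integrable_indicator ((hG_int (x i) (x j)).const_mul (t i * t j)) (hmeas i j)
    have hkey : ∀ i j : Fin N, t i * t j * F (x i) (x j) = ∫ z, f i j z := by
      intro i j
      rw [hf]
      rw [integral_indicator (hmeas i j)]
      rw [hF]
      rw [← integral_const_mul]
    have hsum : ∑ i, ∑ j, t i * t j * F (x i) (x j) = ∫ z, ∑ i, ∑ j, f i j z := by
      simp_rw [hkey]
      rw [integral_finset_sum _ (fun i _ => integrable_finset_sum _ (fun j _ => hint i j))]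
      refine Finset.sum_congr rfl fun i _ => ?_
      rw [integral_finset_sum _ (fun j _ => hint i j)]
    rw [hsum]
    apply integral_nonneg_of_ae
    have hae : ∀ᵐ z : EuclideanSpace ℝ (Fin n), ∀ i, z ≠ x i := by
      rw [MeasureTheory.ae_all_iff]
      intro i
      have : volume ({x i} : Set (EuclideanSpace ℝ (Fin n))) = 0 := measure_singleton _
      filter_upwards [measure_eq_zero_iff_ae_notMem.mp this] with z hz
      simpa using hz
    filter_upwards [hae] with z hz
    set u : Fin N → EuclideanSpace ℝ (Fin n) := fun i => nu (x i) z with hu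
    have hunorm : ∀ i, ‖u i‖ = 1 := by
      intro i
      have hne : x i - z ≠ 0 := sub_ne_zero.mpr (fun h => hz i h.symm)
      rw [hu]
      simp only [hnu]
      rw [norm_smul, norm_inv, norm_norm, inv_mul_cancel₀ (norm_ne_zero_iff.mpr hne)]
    set s : Fin N → ℝ := fun i => if z ∈ B i then t i else 0 with hs
    have := hg_pd N u hunorm s
    have heq : ∑ i, ∑ j, s i * s j * g (inner ℝ (u i) (u j)) = ∑ i, ∑ j, f i j z := by
      refine Finset.sum_congr rfl fun i _ => Finset.sum_congr rfl fun j _ => ?_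
      rw [hf, hs]
      simp only [Set.indicator_apply, Set.mem_inter_iff]
      by_cases hi : z ∈ B i <;> by_cases hj : z ∈ B j <;> simp [hi, hj, hu]
    rw [← heq]
    exact this
  · -- radiality
    intro x y x' y' hnorm
    have rnorm : ‖y - x‖ = ‖y' - x'‖ := by
      rw [norm_sub_rev, norm_sub_rev y' x', hnorm]
    set K := (ℝ ∙ ((y - x) - (y' - x')))ᗮ with hK
    set r := Submodule.reflection K with hr0
    have hr : r (y - x) = y' - x' := Submodule.reflection_sub rnorm
    set e : EuclideanSpace ℝ (Fin n) → EuclideanSpace ℝ (Fin n) := fun z => x' + r (z - x) with he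
    have he_sub : ∀ a b : EuclideanSpace ℝ (Fin n), e a - e b = r (a - b) := by
      intro a b
      rw [he]
      simp only
      rw [add_sub_add_left_eq_sub, ← map_sub, sub_sub_sub_cancel_right]
    have hex : e x = x' := by rw [he]; simp
    have hey : e y = y' := by
      rw [he]; simp only [hr]; abel
    have hiso : Isometry e := by
      apply Isometry.of_dist_eq
      intro a b
      rw [dist_eq_norm, dist_eq_norm, he_sub, r.norm_map]
    have hemb : MeasurableEmbedding e :=
      hiso.isClosedEmbedding.measurableEmbedding
    have hmp : MeasurePreserving e volume volume := by
      have h1 : MeasurePreserving (fun z : EuclideanSpace ℝ (Fin n) => z - x) volume volume :=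
        measurePreserving_sub_right volume x
      have h2 : MeasurePreserving (r : EuclideanSpace ℝ (Fin n) → EuclideanSpace ℝ (Fin n)) volume volume :=
        r.measurePreserving
      have h3 : MeasurePreserving (fun w : EuclideanSpace ℝ (Fin n) => x' + w) volume volume :=
        measurePreserving_add_left volume x'
      exact (h3.comp (h2.comp h1))
    have hpre : e ⁻¹' (closedBall x' R ∩ closedBall y' R)
        = closedBall x R ∩ closedBall y R := by
      ext z
      simp only [Set.mem_preimage, Set.mem_inter_iff, mem_closedBall, ← hex, ← hey,
        hiso.dist_eq]
    have hptw : ∀ z : EuclideanSpace ℝ (Fin n),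
        g (inner ℝ (‖x' - e z‖⁻¹ • (x' - e z)) (‖y' - e z‖⁻¹ • (y' - e z)))
          = g (inner ℝ (‖x - z‖⁻¹ • (x - z)) (‖y - z‖⁻¹ • (y - z))) := by
      intro z
      have hx : x' - e z = r (x - z) := by rw [← hex, he_sub]
      have hy : y' - e z = r (y - z) := by rw [← hey, he_sub]
      rw [hx, hy, r.norm_map, r.norm_map, ← r.map_smul, ← r.map_smul,
        r.inner_map_map]
    rw [hF x y, hF x' y']
    rw [← hmp.setIntegral_preimage_emb hemb _ (closedBall x' R ∩ closedBall y' R)]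
    rw [hpre]
    exact (setIntegral_congr_fun ((measurableSet_closedBall).inter measurableSet_closedBall)
      (fun z _ => (hptw z).symm))
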